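/- arXiv:1601.01001 — 6 statements merged into one kernel-verified Lean document; each statement's English description precedes it below -/
import Mathlib

section
/- If I_n is a lower ω-invariant of a loop, i.e. F(0) ⪰ I_0 and F(I_n) ⪰ I_{n+1} for all n, where F : T → T is a monotone ω-continuous map on the ω-cpo T of run-times, and the pointwise limit L = lim_{n→∞} I_n exists, then lfp F ⪰ L. -/
/-- lower ω-invariants give lower bounds on the least fixed point
`lfp F = ⨆ n, F^[n] 0` of a monotone ω-continuous run-time transformer. -/
theorem lower_omega_invariant_bound {α : Type*}
    (F : (α → ENNReal) → (α → ENNReal))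
    (hmono : Monotone F)
    (hcont : ∀ f : ℕ → α → ENNReal, Monotone f → F (⨆ n, f n) = ⨆ n, F (f n))
    (I : ℕ → α → ENNReal)
    (h0 : I 0 ≤ F 0)
    (hstep : ∀ n, I (n + 1) ≤ F (I n))
    (L : α → ENNReal)
    (hlim : ∀ σ, Filter.Tendsto (fun n => I n σ) Filter.atTop (nhds (L σ))) :
    L ≤ ⨆ n, F^[n] 0 := by
  have key : ∀ n, I n ≤ F^[n + 1] 0 := by
    intro n
    induction n with
    | zero => simpa using h0
    | succ k ih =>
      calc I (k + 1) ≤ F (I k) := hstep k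
        _ ≤ F (F^[k + 1] 0) := hmono ih
        _ = F^[k + 2] 0 := (Function.iterate_succ_apply' F (k + 1) 0).symm
  intro σ
  have : ∀ n, I n σ ≤ (⨆ n, F^[n] 0) σ := by
    intro n
    rw [iSup_apply]
    exact le_trans (key n σ) (le_iSup (fun m => F^[m] 0 σ) (n + 1))
  exact le_of_tendsto (hlim σ) (Filter.Eventually.of_forall this)
end

section
/- If I_n is an upper ω-invariant of a loop, i.e. F(0) ⪯ I_0 and F(I_n) ⪯ I_{n+1} for all n, where F : T → T is a monotone ω-continuous map on the ω-cpo T of run-times, and the pointwise limit L = lim_{n→∞} I_n exists, then lfp F ⪯ L. -/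
/-- upper ω-invariants give upper bounds on the least fixed point
`lfp F = ⨆ n, F^[n] 0` of a monotone ω-continuous run-time transformer. -/
theorem upper_omega_invariant_bound {α : Type*}
    (F : (α → ENNReal) → (α → ENNReal))
    (hmono : Monotone F)
    (hcont : ∀ f : ℕ → α → ENNReal, Monotone f → F (⨆ n, f n) = ⨆ n, F (f n))
    (I : ℕ → α → ENNReal)
    (h0 : F 0 ≤ I 0)
    (hstep : ∀ n, F (I n) ≤ I (n + 1))
    (L : α → ENNReal)
    (hlim : ∀ σ, Filter.Tendsto (fun n => I n σ) Filter.atTop (nhds (L σ))) :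
    (⨆ n, F^[n] 0) ≤ L := by
  -- iterates are monotone in n
  have hiter : Monotone (fun n => F^[n] (0 : α → ENNReal)) := by
    apply monotone_nat_of_le_succ
    intro n
    induction n with
    | zero => exact bot_le
    | succ n ih =>
      simp only [Function.iterate_succ_apply'] at ih ⊢
      exact hmono ih
  -- F^[n+1] 0 ≤ I n
  have key : ∀ n, F^[n + 1] 0 ≤ I n := by
    intro n
    induction n with
    | zero => simpa using h0
    | succ n ih =>
      calc F^[n + 2] 0 = F (F^[n + 1] 0) := Function.iterate_succ_apply' F _ _
        _ ≤ F (I n) := hmono ih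
        _ ≤ I (n + 1) := hstep n
  refine iSup_le fun n => ?_
  intro σ
  refine ge_of_tendsto (hlim σ) ?_
  filter_upwards [Filter.eventually_ge_atTop n] with m hm
  exact le_trans (hiter (Nat.le_succ_of_le hm) σ) (key m σ)
end

section
/- For the geometric loop functional F as above, the sequence I_n(c) = 1 + [c = 1]·(4 − 3/2^n) satisfies F(0) = I_0 and F(I_n) = I_{n+1} for all n; consequently lfp F(c) = 1 + [c = 1]·4 for all c. -/
/-- The characteristic functional of the geometric loop
`while (c = 1) { c :≈ ½⟨0⟩ + ½⟨1⟩ }` with respect to continuation 0. -/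
noncomputable def geoF (X : ℤ → ENNReal) : ℤ → ENNReal :=
  fun c => 1 + if c = 1 then 1 + (1 / 2) * X 0 + (1 / 2) * X 1 else 0

/-- The ω-invariant `I_n(c) = 1 + [c = 1]·(4 − 3/2^n)`. -/
noncomputable def geoI (n : ℕ) : ℤ → ENNReal :=
  fun c => 1 + if c = 1 then 4 - 3 / 2 ^ n else 0

lemma geo_43 : (4 : ENNReal) - 3 = 1 :=
  ENNReal.sub_eq_of_eq_add (by norm_num) (by norm_num)

lemma geo_base : geoF 0 = geoI 0 := by
  funext c
  simp [geoF, geoI, geo_43]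

lemma geo_div_le (n : ℕ) : (3 : ENNReal) / 2 ^ n ≤ 3 := by
  calc (3 : ENNReal) / 2 ^ n ≤ 3 / 1 := by
        gcongr; exact one_le_pow_of_one_le' (by norm_num) n
    _ = 3 := by norm_num

lemma geo_add_sub (a : ENNReal) {b c : ENNReal} (h : c ≤ b) (hc : c ≠ ⊤) :
    a + b - c = a + (b - c) := by
  refine ENNReal.sub_eq_of_eq_add hc ?_
  rw [add_assoc, tsub_add_cancel_of_le h]

lemma geo_half : (2:ENNReal) = 4 / 2 :=
  (ENNReal.eq_div_iff (by norm_num) (by norm_num)).mpr (by norm_num)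

lemma geo_fin (n : ℕ) : (3:ENNReal) / 2 ^ n ≠ ⊤ :=
  (ENNReal.div_lt_top (by norm_num) (by positivity)).ne

lemma geo_step (n : ℕ) : geoF (geoI n) = geoI (n + 1) := by
  funext c
  by_cases hc : c = 1
  · simp only [geoF, geoI, hc, show ((1:ℤ) = 1) = True from by simp,
      show ((0:ℤ) = 1) = False from by simp, if_true, if_false, add_zero]
    have ha : (1:ENNReal)/2 * 4 = 2 := by
      rw [one_div, show (4:ENNReal) = 2*2 by norm_num, ← mul_assoc,
        ENNReal.inv_mul_cancel (by norm_num) (by norm_num), one_mul]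
    have hb : (1:ENNReal)/2 * (3/2^n) = 3/2^(n+1) := by
      rw [one_div, ENNReal.div_eq_inv_mul, ENNReal.div_eq_inv_mul, pow_succ,
        ENNReal.mul_inv (Or.inr (by norm_num)) (Or.inr (by norm_num))]
      ring
    have key : (1:ENNReal) / 2 * (4 - 3 / 2 ^ n) = 2 - 3 / 2 ^ (n + 1) := by
      rw [ENNReal.mul_sub (fun _ _ => by norm_num), ha, hb]
    rw [mul_add, mul_one, key]
    have h2 : (3:ENNReal) / 2 ^ (n+1) ≤ 2 := by
      rw [ENNReal.div_le_iff (by positivity) (by simp)]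
      calc (3:ENNReal) ≤ 2 * 2 := by norm_num
        _ ≤ 2 * 2 ^ (n+1) := by
            gcongr
            exact le_self_pow₀ (by norm_num : (1:ENNReal) ≤ 2) n.succ_ne_zero
    have h4 : (3:ENNReal) / 2 ^ (n+1) ≤ 4 := le_trans (geo_div_le _) (by norm_num)
    calc (1:ENNReal) + (1 + 1/2 + (1/2 + (2 - 3 / 2^(n+1))))
        = 1 + 1 + (1/2 + 1/2) + (2 - 3 / 2^(n+1)) := by ring
      _ = 1 + 1 + 1 + (2 - 3 / 2^(n+1)) := by rw [ENNReal.add_halves 1]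
      _ = 3 + (2 - 3 / 2^(n+1)) := by norm_num
      _ = 3 + 2 - 3 / 2^(n+1) := (geo_add_sub 3 h2 (geo_fin _)).symm
      _ = 1 + 4 - 3 / 2^(n+1) := by norm_num
      _ = 1 + (4 - 3 / 2^(n+1)) := geo_add_sub 1 h4 (geo_fin _)
  · simp [geoF, geoI, hc]

lemma geo_iter (n : ℕ) : geoF^[n+1] 0 = geoI n := by
  induction n with
  | zero => simpa using geo_base
  | succ n ih => rw [Function.iterate_succ_apply', ih, geo_step]

lemma geo_tendsto : Filter.Tendsto (fun n : ℕ => geoI n 1) Filter.atTop (nhds 5) := by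
  have h0 : Filter.Tendsto (fun n : ℕ => (3:ENNReal) / 2 ^ n) Filter.atTop (nhds 0) := by
    have := ENNReal.Tendsto.const_mul (a := (3:ENNReal))
      (ENNReal.tendsto_pow_atTop_nhds_zero_of_lt_one
        (by simp [ENNReal.inv_lt_one] : (2:ENNReal)⁻¹ < 1))
      (Or.inr (by norm_num))
    simpa [ENNReal.div_eq_inv_mul, mul_comm, ← ENNReal.inv_pow, ENNReal.div_eq_inv_mul,
      mul_comm, mul_left_comm] using this
  have h1 : Filter.Tendsto (fun n : ℕ => (4:ENNReal) - 3 / 2 ^ n) Filter.atTop (nhds 4) := by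
    simpa using ENNReal.Tendsto.sub (tendsto_const_nhds (x := (4:ENNReal))) h0
      (Or.inl (by norm_num))
  have h2 := h1.const_add (1:ENNReal)
  have : ∀ n : ℕ, geoI n 1 = 1 + (4 - 3 / 2 ^ n) := fun n => by
    simp [geoI]
  simp only [this]
  convert h2 using 2
  norm_num

theorem geo_final (c : ℤ) : (⨆ n, geoF^[n] 0) c = 1 + if c = 1 then 4 else 0 := by
  rw [iSup_apply]
  by_cases hc : c = 1
  · subst hc
    rw [if_pos rfl]
    apply le_antisymm
    · apply iSup_le
      intro n
      cases n with
      | zero => simp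
      | succ n =>
        rw [geo_iter]
        show (1:ENNReal) + ite _ _ _ ≤ _
        rw [if_pos rfl]
        gcongr
        exact tsub_le_self
    · have h5 : (1:ENNReal) + 4 = 5 := by norm_num
      rw [h5]
      refine le_of_tendsto geo_tendsto (Filter.Eventually.of_forall fun n => ?_)
      calc geoI n 1 = geoF^[n+1] 0 1 := by rw [geo_iter]
        _ ≤ ⨆ m, geoF^[m] 0 1 := le_iSup (fun m => geoF^[m] 0 1) (n+1)
  · simp only [if_neg hc, add_zero]
    apply le_antisymm
    · apply iSup_le
      intro n
      cases n with
      | zero => simp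
      | succ n => rw [geo_iter]; simp [geoI, hc]
    · calc (1:ENNReal) = geoF^[1] 0 c := by simp [geoF, hc]
        _ ≤ ⨆ m, geoF^[m] 0 c := le_iSup (fun m => geoF^[m] 0 c) 1

/-- the sequence `I_n` satisfies `F(0) = I_0` and
`F(I_n) = I_{n+1}`; consequently `lfp F (c) = 1 + [c = 1]·4`. -/
theorem geo_exact_runtime :
    geoF 0 = geoI 0 ∧ (∀ n, geoF (geoI n) = geoI (n + 1)) ∧
    ∀ c : ℤ, (⨆ n, geoF^[n] 0) c = 1 + if c = 1 then 4 else 0 :=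
  ⟨geo_base, geo_step, geo_final⟩
end

section
/- The coefficients a_{n,k} = 2^{−n}·(−C(n, ⌊(n−k)/2⌋) + 2·Σ_{i=0}^{n−k} 2^i·C(n−i, ⌊(n−i−k)/2⌋)) satisfy the recurrence a_{n+1,k} = ½·(a_{n,k−1} + a_{n,k+1}) for all 1 ≤ k ≤ n+1. -/
/-- Binomial coefficient `C(m, j)` with the convention `C(m, j) = 0` for `j < 0`. -/
def binomZ (m : ℕ) (j : ℤ) : ℚ :=
  if j < 0 then 0 else (m.choose j.toNat : ℚ)

/-- Random-walk coefficients
`a_{n,k} = 2^{−n}·(−C(n, ⌊(n−k)/2⌋) + 2·Σ_{i=0}^{n−k} 2^i·C(n−i, ⌊(n−i−k)/2⌋))`. -/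
def rwA (n k : ℕ) : ℚ :=
  (1 / 2 ^ n) * (-(binomZ n (((n : ℤ) - k).fdiv 2)) +
    2 * ∑ i ∈ Finset.range (n - k + 1),
      2 ^ i * binomZ (n - i) (((n : ℤ) - i - k).fdiv 2))

lemma binomZ_neg {m : ℕ} {j : ℤ} (h : j < 0) : binomZ m j = 0 := by simp [binomZ, h]

lemma fdiv_two_neg {x : ℤ} (h : x < 0) : x.fdiv 2 < 0 := by
  rw [Int.fdiv_eq_ediv_of_nonneg _ (by norm_num)]; omega

lemma fdiv_two_sub_two (x : ℤ) : (x - 2).fdiv 2 = x.fdiv 2 - 1 := by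
  rw [Int.fdiv_eq_ediv_of_nonneg _ (by norm_num), Int.fdiv_eq_ediv_of_nonneg _ (by norm_num)]; omega

lemma binomZ_pascal (m : ℕ) (j : ℤ) :
    binomZ (m + 1) j = binomZ m j + binomZ m (j - 1) := by
  unfold binomZ
  rcases lt_trichotomy j 0 with h | h | h
  · rw [if_pos h, if_pos h, if_pos (by omega : j - 1 < 0)]; ring
  · subst h; norm_num
  · rw [if_neg (by omega), if_neg (by omega), if_neg (by omega : ¬ j - 1 < 0)]
    have ht : j.toNat = (j - 1).toNat + 1 := by omega
    rw [ht, Nat.choose_succ_succ]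
    push_cast; ring

lemma sum_ext (m c a : ℕ) (ha : m - c + 1 ≤ a + 1) :
    ∑ i ∈ Finset.range (m - c + 1), (2 : ℚ) ^ i * binomZ (m - i) (((m : ℤ) - i - c).fdiv 2)
      = ∑ i ∈ Finset.range (a + 1), (2 : ℚ) ^ i * binomZ (m - i) (((m : ℤ) - i - c).fdiv 2) := by
  apply Finset.sum_subset
  · exact Finset.range_subset_range.mpr ha
  · intro i hi hni
    simp only [Finset.mem_range, not_lt] at hi hni
    rw [binomZ_neg (fdiv_two_neg (by omega)), mul_zero]

/-- `a_{n+1,k} = ½·(a_{n,k−1} + a_{n,k+1})` for `1 ≤ k ≤ n+1`. -/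
theorem rwA_recurrence (n k : ℕ) (h1 : 1 ≤ k) (h2 : k ≤ n + 1) :
    rwA (n + 1) k = (1 / 2) * (rwA n (k - 1) + rwA n (k + 1)) := by
  have hk1 : ((k - 1 : ℕ) : ℤ) = (k : ℤ) - 1 := by omega
  simp only [rwA]
  rw [sum_ext (n + 1) k (n + 1) (by omega), sum_ext n (k - 1) (n + 1) (by omega),
    sum_ext n (k + 1) (n + 1) (by omega)]
  have hsum : ∑ i ∈ Finset.range (n + 2),
        (2 : ℚ) ^ i * binomZ (n + 1 - i) ((((n : ℕ) + 1 : ℤ) - i - k).fdiv 2)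
      = (∑ i ∈ Finset.range (n + 2),
          (2 : ℚ) ^ i * binomZ (n - i) (((n : ℤ) - i - (k - 1 : ℕ)).fdiv 2))
        + ∑ i ∈ Finset.range (n + 2),
          (2 : ℚ) ^ i * binomZ (n - i) (((n : ℤ) - i - (k + 1 : ℕ)).fdiv 2) := by
    rw [← Finset.sum_add_distrib]
    apply Finset.sum_congr rfl
    intro i hi
    simp only [Finset.mem_range] at hi
    rcases Nat.lt_or_ge i (n + 1) with hin | hin
    · have hfa : (n + 1 - i : ℕ) = (n - i : ℕ) + 1 := by omega
      have ha1 : ((n : ℤ) - i - (k - 1 : ℕ)) = ((n : ℕ) + 1 : ℤ) - i - k := by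
        rw [hk1]; ring
      have ha2 : ((n : ℤ) - i - (k + 1 : ℕ)) = (((n : ℕ) + 1 : ℤ) - i - k) - 2 := by
        push_cast; ring
      rw [hfa, binomZ_pascal, ha1, ha2, fdiv_two_sub_two]
      ring
    · have hi' : i = n + 1 := by omega
      subst hi'
      rw [binomZ_neg (fdiv_two_neg (by omega)), binomZ_neg (fdiv_two_neg (by push_cast [hk1]; omega)),
        binomZ_neg (fdiv_two_neg (by push_cast; omega))]
      ring
  have hhead : binomZ (n + 1) ((((n : ℕ) + 1 : ℤ) - k).fdiv 2)
      = binomZ n (((n : ℤ) - (k - 1 : ℕ)).fdiv 2) + binomZ n (((n : ℤ) - (k + 1 : ℕ)).fdiv 2) := by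
    have ha1 : ((n : ℤ) - (k - 1 : ℕ)) = ((n : ℕ) + 1 : ℤ) - k := by rw [hk1]; ring
    have ha2 : ((n : ℤ) - (k + 1 : ℕ)) = (((n : ℕ) + 1 : ℤ) - k) - 2 := by push_cast; ring
    rw [binomZ_pascal, ha1, ha2, fdiv_two_sub_two]
  push_cast at hsum hhead ⊢
  rw [hsum, hhead]
  field_simp
  ring
end

section
/- The coefficients a_{n,k} = 2^{−n}·(−C(n, ⌊(n−k)/2⌋) + 2·Σ_{i=0}^{n−k} 2^i·C(n−i, ⌊(n−i−k)/2⌋)) satisfy the recurrence a_{n+1,0} = 2 + ½·(a_{n,0} + a_{n,1}) for all n ≥ 0. -/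
lemma binomZ_natCast (m k : ℕ) : binomZ m (k : ℤ) = (m.choose k : ℚ) := by
  simp [binomZ]

lemma fdiv_two_natCast (a : ℕ) : ((a : ℤ)).fdiv 2 = ((a / 2 : ℕ) : ℤ) := by
  rw [Int.fdiv_eq_ediv_of_nonneg _ (by norm_num)]; omega

lemma nat_key (m : ℕ) :
    (m + 2).choose ((m + 2)/2) = (m+1).choose ((m+1)/2) + (m+1).choose (m/2) := by
  have h2 : (m+2)/2 = m/2 + 1 := by omega
  rw [h2, Nat.choose_succ_succ]
  rcases Nat.even_or_odd m with ⟨t, ht⟩ | ⟨t, ht⟩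
  · subst ht
    have h1 : (t + t + 1)/2 = t := by omega
    have h3 : (t+t)/2 = t := by omega
    rw [h1, h3, show t+t+1 = 2*t+1 by ring, Nat.choose_symm_half]
  · subst ht
    have h1 : (2*t+1+1)/2 = t+1 := by omega
    have h3 : (2*t+1)/2 = t := by omega
    rw [h1, h3]
    simp only [Nat.succ_eq_add_one]
    omega

lemma binomZ_neg_one (m : ℕ) : binomZ m ((((0:ℕ):ℤ) - 1).fdiv 2) = 0 := by
  norm_num [binomZ, show Int.fdiv (-1) 2 = -1 from by decide]

lemma binomZ_key (m : ℕ) :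
    binomZ (m+1) (((m:ℤ)+1).fdiv 2)
      = binomZ m ((m:ℤ).fdiv 2) + binomZ m (((m:ℤ)-1).fdiv 2) := by
  rcases m with _ | s
  · norm_num [binomZ, show Int.fdiv 1 2 = 0 from by decide,
      show Int.fdiv (-1) 2 = -1 from by decide, show Int.fdiv 0 2 = 0 from by decide]
  · have e1 : ((s:ℤ)+1+1) = (((s+2 : ℕ)) : ℤ) := by push_cast; ring
    have e2 : ((s:ℤ)+1-1) = (((s : ℕ)) : ℤ) := by push_cast; ring
    push_cast
    rw [e1, e2, fdiv_two_natCast, fdiv_two_natCast,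
      show ((s:ℤ)+1) = (((s+1:ℕ)):ℤ) by push_cast; ring, fdiv_two_natCast,
      binomZ_natCast, binomZ_natCast, binomZ_natCast, nat_key]
    push_cast
    ring

lemma binomZ_key' (n : ℕ) :
    binomZ (n+1) ((((n+1:ℕ)):ℤ).fdiv 2)
      = binomZ n ((n:ℤ).fdiv 2) + binomZ n (((n:ℤ)-1).fdiv 2) := by
  rw [show (((n+1:ℕ)):ℤ) = (n:ℤ)+1 by push_cast; ring, binomZ_key]

lemma sum_key (n : ℕ) :
    ∑ i ∈ Finset.range (n+1+1), 2^i * binomZ (n+1-i) ((((n+1:ℕ):ℤ) - i).fdiv 2)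
      = 2^(n+1) + ∑ i ∈ Finset.range (n+1), 2^i * binomZ (n-i) (((n:ℤ) - i).fdiv 2)
        + ∑ i ∈ Finset.range (n-1+1), 2^i * binomZ (n-i) (((n:ℤ) - i - 1).fdiv 2) := by
  have hlast : binomZ (n+1-(n+1)) ((((n+1:ℕ):ℤ) - ((n+1:ℕ):ℤ)).fdiv 2) = 1 := by
    rw [show (((n+1:ℕ):ℤ) - ((n+1:ℕ):ℤ)) = 0 by ring, Int.zero_fdiv,
      show n+1-(n+1) = 0 by omega]
    simp [binomZ]
  have step : ∀ i ∈ Finset.range (n+1),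
      2^i * binomZ (n+1-i) ((((n+1:ℕ):ℤ) - i).fdiv 2)
        = 2^i * binomZ (n-i) (((n:ℤ) - i).fdiv 2)
          + 2^i * binomZ (n-i) (((n:ℤ) - i - 1).fdiv 2) := by
    intro i hi
    rw [Finset.mem_range] at hi
    have h1 : n+1-i = (n-i)+1 := by omega
    have h2 : (((n+1:ℕ)):ℤ) - i = ((n-i:ℕ):ℤ)+1 := by omega
    have h4 : ((n:ℤ) - i - 1) = ((n - i : ℕ) : ℤ) - 1 := by omega
    have h3 : ((n:ℤ) - i) = ((n - i : ℕ) : ℤ) := by omega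
    rw [h1, h2, h4, h3, binomZ_key (n-i)]
    ring
  rw [Finset.sum_range_succ, hlast, mul_one, Finset.sum_congr rfl step,
    Finset.sum_add_distrib]
  have hS : ∑ i ∈ Finset.range (n+1), 2^i * binomZ (n-i) (((n:ℤ) - i - 1).fdiv 2)
      = ∑ i ∈ Finset.range (n-1+1), 2^i * binomZ (n-i) (((n:ℤ) - i - 1).fdiv 2) := by
    rcases n with _ | m
    · norm_num
    · rw [show m+1-1+1 = m+1 by omega, Finset.sum_range_succ]
      have hz : binomZ (m+1-(m+1)) (((((m+1:ℕ)):ℤ) - ((m+1:ℕ):ℤ) - 1).fdiv 2) = 0 := by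
        rw [show ((((m+1:ℕ)):ℤ) - ((m+1:ℕ):ℤ) - 1) = -1 by ring,
          show Int.fdiv (-1) 2 = -1 from by decide]
        simp [binomZ]
      push_cast at hz ⊢
      rw [hz, mul_zero, add_zero]
  rw [hS]
  ring

/-- `a_{n+1,0} = 2 + ½·(a_{n,0} + a_{n,1})` for all `n ≥ 0`. -/
theorem rwA_recurrence_zero (n : ℕ) :
    rwA (n + 1) 0 = 2 + (1 / 2) * (rwA n 0 + rwA n 1) := by
  unfold rwA
  simp only [Nat.cast_zero, sub_zero, Nat.sub_zero, Nat.cast_one, Nat.cast_ofNat]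
  rw [binomZ_key' n, sum_key n]
  have h2 : (2:ℚ)^n ≠ 0 := by positivity
  field_simp
  ring
end

section
/- For all n ≥ 2, the random-walk coefficient satisfies a_{n,0} ≥ 1 + H_{⌊n/2⌋}, where H_m = Σ_{k=1}^m 1/k is the m-th harmonic number; consequently lim_{n→∞} a_{n,0} = ∞. -/
/-- The `m`-th harmonic number `H_m = Σ_{k=1}^m 1/k`. -/
def harmonic' (m : ℕ) : ℚ := ∑ k ∈ Finset.range m, 1 / (k + 1 : ℚ)

/-- normalized central binomial ratio -/
def cc (m : ℕ) : ℚ := (m.choose (m / 2) : ℚ) / 2 ^ m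

lemma binomZ_nat (m : ℕ) : binomZ m ((m : ℤ).fdiv 2) = (m.choose (m / 2) : ℚ) := by
  have h : ((m : ℤ)).fdiv 2 = ((m / 2 : ℕ) : ℤ) := by
    exact_mod_cast (Int.ofNat_fdiv m 2).symm
  unfold binomZ
  rw [h, if_neg (by exact not_lt.2 (Int.natCast_nonneg _)), Int.toNat_natCast]

lemma cc_nonneg (m : ℕ) : 0 ≤ cc m := by
  unfold cc; positivity

lemma cc_le_one (m : ℕ) : cc m ≤ 1 := by
  unfold cc
  rw [div_le_one (by positivity)]
  have h : m.choose (m / 2) ≤ 2 ^ m := by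
    calc m.choose (m / 2) ≤ ∑ k ∈ Finset.range (m + 1), m.choose k :=
          Finset.single_le_sum (f := fun k => m.choose k) (fun _ _ => Nat.zero_le _)
            (Finset.mem_range.2 (Nat.lt_succ_of_le (Nat.div_le_self m 2)))
      _ = 2 ^ m := Nat.sum_range_choose m
  exact_mod_cast h

lemma cc_zero : cc 0 = 1 := by norm_num [cc]

lemma one_div_le_two_cc (j : ℕ) (hj : 1 ≤ j) : 1 / (j : ℚ) ≤ 2 * cc (2 * j) := by
  have hnat : 4 ^ j ≤ 2 * j * Nat.centralBinom j :=
    Nat.four_pow_le_two_mul_self_mul_centralBinom j hj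
  have hhalf : 2 * j / 2 = j := by omega
  have hch : (2 * j).choose (2 * j / 2) = Nat.centralBinom j := by
    rw [hhalf, Nat.centralBinom_eq_two_mul_choose]
  unfold cc
  rw [hch]
  have hjq : (0 : ℚ) < (j : ℚ) := by exact_mod_cast hj
  rw [div_le_iff₀ hjq]
  have h2 : (2 : ℚ) ^ (2 * j) = 4 ^ j := by
    rw [pow_mul]; norm_num
  have hq : (4 : ℚ) ^ j ≤ 2 * j * Nat.centralBinom j := by exact_mod_cast hnat
  have hpos : (0 : ℚ) < 2 ^ (2 * j) := by positivity
  rw [div_eq_mul_inv, mul_assoc, mul_assoc]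
  rw [h2]
  have h4 : (0:ℚ) < 4 ^ j := by positivity
  calc (1 : ℚ) = 4 ^ j * (4 ^ j)⁻¹ := by field_simp
    _ ≤ 2 * j * Nat.centralBinom j * (4 ^ j)⁻¹ := by
        apply mul_le_mul_of_nonneg_right hq (by positivity)
    _ = 2 * ((Nat.centralBinom j : ℚ) * (4 ^ j)⁻¹ * j) := by ring
  ring_nf
  exact le_refl _

lemma rwA_eq (n : ℕ) : rwA n 0 = -(cc n) + 2 * ∑ m ∈ Finset.range (n + 1), cc m := by
  unfold rwA
  simp only [Nat.cast_zero, sub_zero, Nat.sub_zero]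
  have hsimp : ∀ i ∈ Finset.range (n + 1),
      (2 : ℚ) ^ i * binomZ (n - i) (((n : ℤ) - i).fdiv 2)
        = 2 ^ i * ((n - i).choose ((n - i) / 2) : ℚ) := by
    intro i hi
    have hi' : i ≤ n := Nat.lt_succ_iff.mp (Finset.mem_range.mp hi)
    have h2 : ((n : ℤ) - i) = ((n - i : ℕ) : ℤ) := by
      push_cast [Nat.cast_sub hi']; ring
    rw [h2, binomZ_nat]
  rw [Finset.sum_congr rfl hsimp]
  have hrefl : ∑ i ∈ Finset.range (n + 1), (2 : ℚ) ^ i * ((n - i).choose ((n - i) / 2) : ℚ)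
      = ∑ m ∈ Finset.range (n + 1), (2 : ℚ) ^ (n - m) * ((m).choose (m / 2) : ℚ) := by
    rw [← Finset.sum_range_reflect]
    apply Finset.sum_congr rfl
    intro m hm
    have hm' : m ≤ n := Nat.lt_succ_iff.mp (Finset.mem_range.mp hm)
    rw [show n + 1 - 1 - m = n - m by omega, show n - (n - m) = m by omega]
  rw [hrefl, binomZ_nat]
  have hsum2 : ∑ m ∈ Finset.range (n + 1), cc m
      = ∑ m ∈ Finset.range (n + 1), (1 / 2 ^ n : ℚ) * (2 ^ (n - m) * ((m).choose (m / 2) : ℚ)) := by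
    apply Finset.sum_congr rfl
    intro m hm
    have hm' : m ≤ n := Nat.lt_succ_iff.mp (Finset.mem_range.mp hm)
    unfold cc
    rw [pow_sub₀ (2 : ℚ) two_ne_zero hm']
    field_simp
  rw [hsum2, ← Finset.mul_sum]
  unfold cc
  ring

lemma main_bound (n : ℕ) : 1 + harmonic' (n / 2) ≤ rwA n 0 := by
  rw [rwA_eq]
  have h1 : -(cc n) ≥ -1 := neg_le_neg (cc_le_one n)
  have hsub : (Finset.range (n / 2 + 1)).image (fun j => 2 * j) ⊆ Finset.range (n + 1) := by
    intro x hx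
    simp only [Finset.mem_image, Finset.mem_range] at hx ⊢
    obtain ⟨j, hj, rfl⟩ := hx
    omega
  have hsum : ∑ m ∈ (Finset.range (n / 2 + 1)).image (fun j => 2 * j), cc m
      ≤ ∑ m ∈ Finset.range (n + 1), cc m :=
    Finset.sum_le_sum_of_subset_of_nonneg hsub (fun m _ _ => cc_nonneg m)
  have himg : ∑ m ∈ (Finset.range (n / 2 + 1)).image (fun j => 2 * j), cc m
      = ∑ j ∈ Finset.range (n / 2 + 1), cc (2 * j) := by
    rw [Finset.sum_image]
    intro a _ b _ hab; simp only at hab; omega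
  have hsplit : ∑ j ∈ Finset.range (n / 2 + 1), cc (2 * j)
      = cc 0 + ∑ j ∈ Finset.range (n / 2), cc (2 * (j + 1)) := by
    rw [Finset.sum_range_succ' (fun j => cc (2 * j)) (n / 2)]
    simp only [mul_zero]
    exact add_comm _ _
  have hharm : harmonic' (n / 2) ≤ 2 * ∑ j ∈ Finset.range (n / 2), cc (2 * (j + 1)) := by
    unfold harmonic'
    rw [Finset.mul_sum]
    apply Finset.sum_le_sum
    intro j _
    have := one_div_le_two_cc (j + 1) (by omega)
    push_cast at this ⊢
    linarith
  have key : 2 + harmonic' (n / 2) ≤ 2 * ∑ m ∈ Finset.range (n + 1), cc m := by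
    calc 2 + harmonic' (n / 2)
        ≤ 2 + 2 * ∑ j ∈ Finset.range (n / 2), cc (2 * (j + 1)) := by linarith
      _ = 2 * (cc 0 + ∑ j ∈ Finset.range (n / 2), cc (2 * (j + 1))) := by
          rw [cc_zero]; ring
      _ = 2 * ∑ j ∈ Finset.range (n / 2 + 1), cc (2 * j) := by rw [hsplit]
      _ = 2 * ∑ m ∈ (Finset.range (n / 2 + 1)).image (fun j => 2 * j), cc m := by rw [himg]
      _ ≤ 2 * ∑ m ∈ Finset.range (n + 1), cc m := by linarith
  linarith

lemma harmonic'_tendsto : Filter.Tendsto harmonic' Filter.atTop Filter.atTop := by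
  rw [Filter.tendsto_atTop]
  intro b
  have hR := Real.tendsto_sum_range_one_div_nat_succ_atTop
  rw [Filter.tendsto_atTop] at hR
  filter_upwards [hR (b : ℝ)] with n hn
  have hcast : ((harmonic' n : ℚ) : ℝ) = ∑ i ∈ Finset.range n, 1 / (i + 1 : ℝ) := by
    unfold harmonic'
    push_cast
    rfl
  have : (b : ℝ) ≤ ((harmonic' n : ℚ) : ℝ) := by rw [hcast]; exact hn
  exact_mod_cast this

/-- `a_{n,0} ≥ 1 + H_{⌊n/2⌋}` for `n ≥ 2`, and hence
`a_{n,0} → ∞`. -/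
theorem rwA_diverges :
    (∀ n : ℕ, 2 ≤ n → 1 + harmonic' (n / 2) ≤ rwA n 0) ∧
    Filter.Tendsto (fun n => rwA n 0) Filter.atTop Filter.atTop := by
  constructor
  · intro n _
    exact main_bound n
  · apply Filter.tendsto_atTop_mono (fun n => main_bound n)
    have hdiv : Filter.Tendsto (fun n : ℕ => n / 2) Filter.atTop Filter.atTop := by
      apply Filter.tendsto_atTop_atTop.2
      intro b
      exact ⟨2 * b, fun a ha => by omega⟩
    have := (harmonic'_tendsto.comp hdiv)
    exact Filter.tendsto_atTop_add_const_left _ 1 this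
end
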